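/- Let (E, ‖·‖) be a two-dimensional real normed space and let ω be a nonzero alternating bilinear form on E. Then Birkhoff orthogonality is a symmetric relation on E (i.e., for all x, y ∈ E, x ⊣_B y implies y ⊣_B x) if and only if there exists λ > 0 such that |ω(x, y)| = λ whenever x, y ∈ E satisfy ‖x‖ = ‖y‖ = 1 and x ⊣_B y. -/

import Mathlib

set_option linter.unusedSectionVars false
set_option linter.unusedVariables false
set_option linter.unnecessarySimpa false
set_option maxHeartbeats 1000000

open Real Set

/-- Birkhoff orthogonality: `x ⊣_B y` iff `‖x‖ ≤ ‖x + t • y‖` for every `t`. -/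
def BirkhoffOrth {E : Type*} [NormedAddCommGroup E] [NormedSpace ℝ E]
    (x y : E) : Prop := ∀ t : ℝ, ‖x‖ ≤ ‖x + t • y‖

namespace Stmt17



variable {E : Type*} [NormedAddCommGroup E] [NormedSpace ℝ E]

lemma skew (ω : E →ₗ[ℝ] E →ₗ[ℝ] ℝ) (halt : ∀ x : E, ω x x = 0) (x y : E) :
    ω x y = - ω y x := by
  have h := halt (x + y)
  simp [map_add, halt x, halt y] at h
  linarith

lemma indep_of_ne_zero (ω : E →ₗ[ℝ] E →ₗ[ℝ] ℝ) (halt : ∀ x : E, ω x x = 0)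
    {u v : E} (huv : ω u v ≠ 0) : LinearIndependent ℝ ![u, v] := by
  rw [LinearIndependent.pair_iff]
  intro s t hst
  have h1 : ω (s • u + t • v) v = 0 := by rw [hst]; simp
  have h2 : ω u (s • u + t • v) = 0 := by rw [hst]; simp
  simp [map_add, map_smul, halt] at h1 h2
  constructor
  · rcases h1 with h | h; exact h; exact absurd h huv
  · rcases h2 with h | h; exact h; exact absurd h huv

lemma span_pair (hdim : Module.finrank ℝ E = 2) {u v : E}
    (hind : LinearIndependent ℝ ![u, v]) (z : E) :
    ∃ s t : ℝ, z = s • u + t • v := by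
  haveI : FiniteDimensional ℝ E := .of_finrank_eq_succ hdim
  have hsp : Submodule.span ℝ {u, v} = ⊤ := by
    apply Submodule.eq_top_of_finrank_eq
    have : ({u, v} : Set E) = Set.range ![u, v] := by
      simp [Matrix.range_cons, Matrix.range_empty]
      ext w; simp [or_comm]
    rw [this, finrank_span_eq_card hind, hdim]
    simp
  have hz : z ∈ Submodule.span ℝ ({u, v} : Set E) := by rw [hsp]; trivial
  rcases Submodule.mem_span_pair.mp hz with ⟨s, t, h⟩
  exact ⟨s, t, h.symm⟩




lemma sin_lb {d x : ℝ} (hd0 : 0 < d) (hd : d ≤ π/2) (h1 : d ≤ x) (h2 : x ≤ π - d) :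
    sin d ≤ sin x := by
  rcases le_or_gt x (π/2) with hx | hx
  · apply (strictMonoOn_sin.monotoneOn) _ _ h1 <;>
      constructor <;> linarith
  · rw [← Real.sin_pi_sub x]
    apply (strictMonoOn_sin.monotoneOn) _ _ (by linarith) <;>
      constructor <;> linarith

lemma mem_window {c x : ℝ} (hc0 : 0 < c) (hc : c ≤ π/2) (hx0 : 0 < x) (hxπ : x < π)
    (hs : sin c ≤ sin x) : c ≤ x ∧ x ≤ π - c := by
  constructor
  · by_contra h
    push_neg at h
    have : sin x < sin c := by
      apply strictMonoOn_sin _ _ h <;> constructor <;> linarith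
    linarith
  · by_contra h
    push_neg at h
    have hs2 : sin (π - x) < sin c := by
      apply strictMonoOn_sin _ _ (by linarith) <;> constructor <;> linarith
    rw [Real.sin_pi_sub] at hs2
    linarith

lemma lower_bound_of_periodic {f : ℝ → ℝ} (hf : Continuous f)
    (hp : Function.Periodic f (2*π)) : ∃ L, ∀ x, L ≤ f x := by
  obtain ⟨θL, _, hmin⟩ := (isCompact_Icc (a := (0:ℝ)) (b := 2*π)).exists_isMinOn
    (nonempty_Icc.mpr (by positivity)) hf.continuousOn
  refine ⟨f θL, fun x => ?_⟩
  obtain ⟨k, hk⟩ : ∃ k : ℤ, x - k * (2*π) ∈ Icc (0:ℝ) (2*π) := by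
    refine ⟨⌊x / (2*π)⌋, ?_⟩
    have h2π : (0:ℝ) < 2*π := by positivity
    constructor
    · have := Int.floor_le (x / (2*π))
      have h1 : (⌊x / (2*π)⌋ : ℝ) * (2*π) ≤ x / (2*π) * (2*π) := by
        apply mul_le_mul_of_nonneg_right this h2π.le
      rw [div_mul_cancel₀] at h1 <;> [linarith; positivity]
    · have := Int.lt_floor_add_one (x / (2*π))
      have h1 : x / (2*π) * (2*π) < ((⌊x / (2*π)⌋ : ℝ) + 1) * (2*π) := by
        apply mul_lt_mul_of_pos_right this h2π
      rw [div_mul_cancel₀] at h1 <;> [linarith; positivity]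
  have : f x = f (x - k * (2*π)) := (hp.sub_int_mul_eq k).symm
  rw [this]
  exact hmin hk

/-- the structure of an orthogonal pair of angles -/
def IsPair (ℓ m : ℝ → ℝ) (θ φ : ℝ) : Prop :=
  θ < φ ∧ φ < θ + π ∧ log (sin (φ - θ)) = ℓ θ + m φ ∧ log (sin (φ - θ)) = ℓ φ + m θ

section

variable {ℓ m : ℝ → ℝ}
variable (hG : ∀ α β : ℝ, 0 < sin (β - α) →
    log (sin (β - α)) ≤ ℓ α + m β ∧ log (sin (β - α)) ≤ ℓ β + m α)

include hG in
/-- monotonicity of partners -/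
lemma pair_mono {θ τ φ χ : ℝ} (hθτ : θ < τ) (h1 : IsPair ℓ m θ φ) (h2 : IsPair ℓ m τ χ) :
    φ ≤ χ := by
  by_contra hcon
  push_neg at hcon  -- χ < φ
  obtain ⟨hθφ, hφπ, hE1, hE1'⟩ := h1
  obtain ⟨hτχ, hχπ, hE2, hE2'⟩ := h2
  -- angles
  set A := φ - θ with hA
  set B := χ - τ with hB
  set C := χ - θ with hC
  set D := φ - τ with hD
  have hA1 : 0 < A := by simp [hA]; linarith
  have hA2 : A < π := by simp [hA]; linarith
  have hB1 : 0 < B := by simp [hB]; linarith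
  have hB2 : B < π := by simp [hB]; linarith
  have hC1 : 0 < C := by simp [hC]; linarith
  have hC2 : C < π := by simp [hC]; linarith
  have hD1 : 0 < D := by simp [hD]; linarith
  have hD2 : D < π := by simp [hD]; linarith
  have hsA : 0 < sin A := Real.sin_pos_of_pos_of_lt_pi hA1 hA2
  have hsB : 0 < sin B := Real.sin_pos_of_pos_of_lt_pi hB1 hB2
  have hsC : 0 < sin C := Real.sin_pos_of_pos_of_lt_pi hC1 hC2
  have hsD : 0 < sin D := Real.sin_pos_of_pos_of_lt_pi hD1 hD2
  have hGC := (hG θ χ hsC).1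
  have hGD := (hG τ φ hsD).1
  -- log sin C + log sin D ≤ log sin A + log sin B
  have hsum : log (sin C) + log (sin D) ≤ log (sin A) + log (sin B) := by
    have : log (sin A) + log (sin B) = (ℓ θ + m φ) + (ℓ τ + m χ) := by rw [hE1, hE2]
    rw [this]
    calc log (sin C) + log (sin D) ≤ (ℓ θ + m χ) + (ℓ τ + m φ) := add_le_add hGC hGD
      _ = (ℓ θ + m φ) + (ℓ τ + m χ) := by ring
  have hprod : sin C * sin D ≤ sin A * sin B := by
    have h1 : log (sin C * sin D) ≤ log (sin A * sin B) := by
      rw [Real.log_mul hsC.ne' hsD.ne', Real.log_mul hsA.ne' hsB.ne']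
      exact hsum
    exact (Real.log_le_log_iff (by positivity) (by positivity)).mp h1
  -- but trigonometry gives the opposite strict inequality
  have hABCD : A + B = C + D := by simp [hA, hB, hC, hD]; ring
  have hcos : cos (A - B) < cos (|C - D|) := by
    apply Real.cos_lt_cos_of_nonneg_of_le_pi (abs_nonneg _) (by linarith)
    rw [abs_lt]
    constructor <;> simp [hA, hB, hC, hD] <;> linarith
  rw [Real.cos_abs] at hcos
  have id1 : cos (A - B) - cos (A + B) = 2 * (sin A * sin B) := by
    rw [Real.cos_sub, Real.cos_add]; ring
  have id2 : cos (C - D) - cos (C + D) = 2 * (sin C * sin D) := by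
    rw [Real.cos_sub, Real.cos_add]; ring
  rw [hABCD] at id1
  nlinarith [hprod, hcos, id1, id2]

include hG in
lemma step {c : ℝ} (hc0 : 0 < c) (hcpi : c ≤ π/2)
    (hPB : ∀ θ φ : ℝ, IsPair ℓ m θ φ → c ≤ φ - θ ∧ φ - θ ≤ π - c)
    {θ τ φ χ : ℝ} (hθτ : θ < τ) (hmesh : τ - θ ≤ c/2)
    (h1 : IsPair ℓ m θ φ) (h2 : IsPair ℓ m τ χ) :
    |(ℓ τ - m τ) - (ℓ θ - m θ)| ≤ (τ - θ) * ((Real.sin (c/2))⁻¹^2 * (χ - φ)) := by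
  have hφχ : φ ≤ χ := pair_mono hG hθτ h1 h2
  obtain ⟨hb1, hb2⟩ := hPB θ φ h1
  obtain ⟨hb3, hb4⟩ := hPB τ χ h2
  have hπ : (0:ℝ) < π := Real.pi_pos
  have hsc2 : 0 < sin (c/2) := Real.sin_pos_of_pos_of_lt_pi (by linarith) (by linarith)
  -- positivity of sines at the four relevant points
  have hs1 : 0 < sin (χ - τ) := Real.sin_pos_of_pos_of_lt_pi (by linarith) (by linarith)
  have hs2 : 0 < sin (χ - θ) := Real.sin_pos_of_pos_of_lt_pi (by linarith) (by linarith)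
  have hs3 : 0 < sin (φ - τ) := Real.sin_pos_of_pos_of_lt_pi (by linarith) (by linarith)
  have hs4 : 0 < sin (φ - θ) := Real.sin_pos_of_pos_of_lt_pi (by linarith) (by linarith)
  obtain ⟨hθφ, hφπ, hE1, hE1'⟩ := h1
  obtain ⟨hτχ, hχπ, hE2, hE2'⟩ := h2
  have hGθχ := hG θ χ hs2
  have hGτφ := hG τ φ hs3
  set u : ℝ → ℝ := fun s => log (sin (χ - s)) - log (sin (φ - s)) with hu
  -- |D τ - D θ| ≤ u τ - u θ
  have habs : |(ℓ τ - m τ) - (ℓ θ - m θ)| ≤ u τ - u θ := by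
    rw [abs_sub_le_iff]
    constructor
    · -- ℓτ - ℓθ ≤ ls(χ-τ) - ls(χ-θ), mτ - mθ ≥ ls(φ-τ) - ls(φ-θ)
      have i1 : ℓ τ - ℓ θ ≤ log (sin (χ - τ)) - log (sin (χ - θ)) := by
        have e : ℓ τ = log (sin (χ - τ)) - m χ := by linarith [hE2]
        have g : ℓ θ ≥ log (sin (χ - θ)) - m χ := by linarith [hGθχ.1]
        linarith
      have i2 : m τ - m θ ≥ log (sin (φ - τ)) - log (sin (φ - θ)) := by
        have e : m θ = log (sin (φ - θ)) - ℓ φ := by linarith [hE1']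
        have g : m τ ≥ log (sin (φ - τ)) - ℓ φ := by linarith [hGτφ.2]
        linarith
      simp only [hu]
      linarith
    · have i3 : ℓ θ - ℓ τ ≤ log (sin (φ - θ)) - log (sin (φ - τ)) := by
        have e : ℓ θ = log (sin (φ - θ)) - m φ := by linarith [hE1]
        have g : ℓ τ ≥ log (sin (φ - τ)) - m φ := by linarith [hGτφ.1]
        linarith
      have i4 : m θ - m τ ≥ log (sin (χ - θ)) - log (sin (χ - τ)) := by
        have e : m τ = log (sin (χ - τ)) - ℓ χ := by linarith [hE2']
        have g : m θ ≥ log (sin (χ - θ)) - ℓ χ := by linarith [hGθχ.2]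
        linarith
      simp only [hu]
      linarith
  rcases eq_or_lt_of_le hφχ with heq | hφχ'
  · -- u τ - u θ = 0
    have h0 : u τ - u θ = 0 := by simp [hu, ← heq]
    rw [h0] at habs
    rw [← heq, sub_self, mul_zero, mul_zero]
    exact habs
  -- derivative facts
  have hsin_ne : ∀ s ∈ Icc θ τ, sin (χ - s) ≠ 0 ∧ sin (φ - s) ≠ 0 := by
    intro s hs
    obtain ⟨hsl, hsr⟩ := hs
    constructor
    · exact (Real.sin_pos_of_pos_of_lt_pi (by linarith) (by linarith)).ne'
    · exact (Real.sin_pos_of_pos_of_lt_pi (by linarith) (by linarith)).ne'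
  set u' : ℝ → ℝ := fun s => cos (φ - s) / sin (φ - s) - cos (χ - s) / sin (χ - s) with hu'
  have hderiv : ∀ s ∈ Icc θ τ, HasDerivAt u (u' s) s := by
    intro s hs
    obtain ⟨hne1, hne2⟩ := hsin_ne s hs
    have d1 : HasDerivAt (fun s : ℝ => χ - s) (-1) s := by
      simpa using (hasDerivAt_id s).const_sub χ
    have d2 : HasDerivAt (fun s : ℝ => sin (χ - s)) (cos (χ - s) * (-1)) s := d1.sin
    have d3 : HasDerivAt (fun s : ℝ => log (sin (χ - s)))
        ((cos (χ - s) * (-1)) / sin (χ - s)) s := d2.log hne1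
    have d1' : HasDerivAt (fun s : ℝ => φ - s) (-1) s := by
      simpa using (hasDerivAt_id s).const_sub φ
    have d2' : HasDerivAt (fun s : ℝ => sin (φ - s)) (cos (φ - s) * (-1)) s := d1'.sin
    have d3' : HasDerivAt (fun s : ℝ => log (sin (φ - s)))
        ((cos (φ - s) * (-1)) / sin (φ - s)) s := d2'.log hne2
    have := d3.sub d3'
    refine this.congr_deriv ?_
    show _ = cos (φ - s) / sin (φ - s) - cos (χ - s) / sin (χ - s)
    ring
  have hcont : ContinuousOn u (Icc θ τ) :=
    fun s hs => ((hderiv s hs).continuousAt).continuousWithinAt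
  obtain ⟨σ, hσ, hslope⟩ := exists_hasDerivAt_eq_slope u u' hθτ hcont
    (fun s hs => hderiv s (Ioo_subset_Icc_self hs))
  -- second MVT for cot on [φ - σ, χ - σ]
  have hσI : σ ∈ Icc θ τ := Ioo_subset_Icc_self hσ
  obtain ⟨hσ1, hσ2⟩ := hσI
  set g : ℝ → ℝ := fun x => cos x / sin x with hg
  set gd : ℝ → ℝ := fun x => -((sin x)^2)⁻¹ with hgd
  have hgx : ∀ x ∈ Icc (φ - σ) (χ - σ), sin (c/2) ≤ sin x := by
    intro x hx
    obtain ⟨hx1, hx2⟩ := hx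
    apply sin_lb (by linarith) (by linarith) (by linarith) (by linarith)
  have hgderiv : ∀ x ∈ Icc (φ - σ) (χ - σ), HasDerivAt g (gd x) x := by
    intro x hx
    have hsx : sin x ≠ 0 := by have := hgx x hx; linarith [hsc2]
    have hdd := (Real.hasDerivAt_cos x).div (Real.hasDerivAt_sin x) hsx
    refine hdd.congr_deriv ?_
    have hpy := Real.sin_sq_add_cos_sq x
    have hnum : -sin x * sin x - cos x * cos x = -1 := by nlinarith [hpy]
    show _ = -((sin x)^2)⁻¹
    rw [hnum, neg_div, one_div]
  have hgcont : ContinuousOn g (Icc (φ - σ) (χ - σ)) :=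
    fun x hx => ((hgderiv x hx).continuousAt).continuousWithinAt
  have hφσχ : φ - σ < χ - σ := by linarith
  obtain ⟨η, hη, hslope2⟩ := exists_hasDerivAt_eq_slope g gd hφσχ hgcont
    (fun x hx => hgderiv x (Ioo_subset_Icc_self hx))
  have hηI : η ∈ Icc (φ - σ) (χ - σ) := Ioo_subset_Icc_self hη
  have hsη : sin (c/2) ≤ sin η := hgx η hηI
  -- now assemble
  have hslope' : u' σ * (τ - θ) = u τ - u θ := by
    rw [eq_div_iff (by linarith : τ - θ ≠ 0)] at hslope
    exact hslope
  have huτθ : u τ - u θ = (τ - θ) * u' σ := by rw [← hslope']; ring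
  have hu'σ : u' σ = (χ - φ) * ((sin η)^2)⁻¹ := by
    have h1 : g (χ - σ) - g (φ - σ) = (χ - σ - (φ - σ)) * gd η := by
      rw [eq_div_iff (by linarith : χ - σ - (φ - σ) ≠ 0)] at hslope2
      rw [← hslope2]; ring
    simp only [hg, hgd] at h1
    simp only [hu']
    have h2 : χ - σ - (φ - σ) = χ - φ := by ring
    rw [h2] at h1
    have : cos (φ - σ) / sin (φ - σ) - cos (χ - σ) / sin (χ - σ)
        = -((cos (χ - σ) / sin (χ - σ)) - (cos (φ - σ) / sin (φ - σ))) := by ring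
    rw [this, h1]
    ring
  have hsηpos : 0 < sin η := lt_of_lt_of_le hsc2 hsη
  have hK : ((sin η)^2)⁻¹ ≤ ((sin (c/2))⁻¹)^2 := by
    rw [← inv_pow]
    apply pow_le_pow_left₀ (inv_nonneg.mpr hsηpos.le)
    rw [inv_le_inv₀ hsηpos hsc2]
    exact hsη
  calc |(ℓ τ - m τ) - (ℓ θ - m θ)| ≤ u τ - u θ := habs
    _ = (τ - θ) * ((χ - φ) * ((sin η)^2)⁻¹) := by rw [huτθ, hu'σ]
    _ ≤ (τ - θ) * ((sin (c/2))⁻¹^2 * (χ - φ)) := by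
        apply mul_le_mul_of_nonneg_left _ (by linarith)
        rw [mul_comm]
        apply mul_le_mul_of_nonneg_right hK (by linarith)

include hG in
theorem D_const (hl : Continuous ℓ) (hm : Continuous m)
    (hpl : Function.Periodic ℓ (2*π)) (hpm : Function.Periodic m (2*π))
    (hEx : ∀ θ : ℝ, ∃ φ : ℝ, IsPair ℓ m θ φ) :
    ∀ a b : ℝ, ℓ a - m a = ℓ b - m b := by
  have hπ : (0:ℝ) < π := Real.pi_pos
  obtain ⟨L, hL⟩ := lower_bound_of_periodic hl hpl
  obtain ⟨M, hM⟩ := lower_bound_of_periodic hm hpm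
  set δ₀ : ℝ := min (Real.exp (L + M)) 1 with hδ₀
  have hδ₀pos : 0 < δ₀ := lt_min (Real.exp_pos _) one_pos
  have hδ₀le : δ₀ ≤ 1 := min_le_right _ _
  set c : ℝ := Real.arcsin δ₀ with hc
  have hc0 : 0 < c := Real.arcsin_pos.mpr hδ₀pos
  have hcpi : c ≤ π/2 := Real.arcsin_le_pi_div_two δ₀
  have hsinc : sin c = δ₀ := Real.sin_arcsin (by linarith) hδ₀le
  have hPB : ∀ θ φ : ℝ, IsPair ℓ m θ φ → c ≤ φ - θ ∧ φ - θ ≤ π - c := by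
    intro θ φ hP
    obtain ⟨h1, h2, hE, _⟩ := hP
    have hspos : 0 < sin (φ - θ) :=
      Real.sin_pos_of_pos_of_lt_pi (by linarith) (by linarith)
    have hsge : sin c ≤ sin (φ - θ) := by
      rw [hsinc]
      have : Real.exp (log (sin (φ - θ))) = sin (φ - θ) := Real.exp_log hspos
      rw [← this, hE]
      calc δ₀ ≤ Real.exp (L + M) := min_le_left _ _
        _ ≤ Real.exp (ℓ θ + m φ) := Real.exp_le_exp.mpr (add_le_add (hL θ) (hM φ))
    exact mem_window hc0 hcpi (by linarith) (by linarith) hsge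
  set K : ℝ := (sin (c/2))⁻¹ ^ 2 with hK
  have hsc2 : 0 < sin (c/2) := Real.sin_pos_of_pos_of_lt_pi (by linarith) (by linarith)
  have hKpos : 0 < K := by rw [hK]; positivity
  choose pf hpf using hEx
  -- main claim for a < b
  have main : ∀ a b : ℝ, a < b → ℓ a - m a = ℓ b - m b := by
    intro a b hab
    set Dd : ℝ → ℝ := fun x => ℓ x - m x with hDd
    have key : ∀ n : ℕ, 0 < n → (b - a)/n ≤ c/2 →
        |Dd b - Dd a| ≤ (b - a)/n * (K * (b - a + π)) := by
      intro n hn hmesh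
      set mesh : ℝ := (b - a)/n with hmesh'
      have hmeshpos : 0 < mesh := by
        apply div_pos (by linarith) (by exact_mod_cast hn)
      set θf : ℕ → ℝ := fun i => a + i * mesh with hθf
      have hθsucc : ∀ i : ℕ, θf (i+1) - θf i = mesh := by
        intro i
        simp only [hθf]
        push_cast
        ring
      have hθlt : ∀ i : ℕ, θf i < θf (i+1) := by
        intro i
        have := hθsucc i
        linarith
      -- induction claim
      have hind : ∀ j : ℕ, |Dd (θf j) - Dd (θf 0)| ≤ mesh * (K * (pf (θf j) - pf (θf 0))) := by
        intro j
        induction j with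
        | zero => simp
        | succ i ih =>
          have hstep := step hG hc0 hcpi hPB (hθlt i) (by rw [hθsucc i]; exact hmesh)
            (hpf (θf i)) (hpf (θf (i+1)))
          rw [hθsucc i] at hstep
          have hmono : pf (θf i) ≤ pf (θf (i+1)) :=
            pair_mono hG (hθlt i) (hpf (θf i)) (hpf (θf (i+1)))
          have hmono0 : pf (θf 0) ≤ pf (θf i) := by
            rcases Nat.eq_zero_or_pos i with rfl | hi
            · exact le_refl _
            · exact pair_mono hG (by
                have : θf 0 < θf i := by
                  simp only [hθf]
                  push_cast
                  have : (0:ℝ) < i := by exact_mod_cast hi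
                  nlinarith
                exact this) (hpf (θf 0)) (hpf (θf i))
          calc |Dd (θf (i+1)) - Dd (θf 0)|
              ≤ |Dd (θf (i+1)) - Dd (θf i)| + |Dd (θf i) - Dd (θf 0)| := by
                have := abs_sub_le (Dd (θf (i+1))) (Dd (θf i)) (Dd (θf 0))
                exact this
            _ ≤ mesh * (K * (pf (θf (i+1)) - pf (θf i))) + mesh * (K * (pf (θf i) - pf (θf 0))) :=
                add_le_add hstep ih
            _ = mesh * (K * (pf (θf (i+1)) - pf (θf 0))) := by ring
      have hθn : θf n = b := by
        simp only [hθf, hmesh']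
        field_simp
        ring
      have hfin := hind n
      rw [hθn] at hfin
      have hθ0 : θf 0 = a := by simp [hθf]
      rw [hθ0] at hfin
      -- bound partner spread
      have hsp1 := (hpf b).1
      have hsp2 := (hpf b).2.1
      have hsp3 := (hpf a).1
      have hb' : pf b - pf a ≤ b - a + π := by linarith
      calc |Dd b - Dd a| ≤ mesh * (K * (pf b - pf a)) := hfin
        _ ≤ mesh * (K * (b - a + π)) := by
            apply mul_le_mul_of_nonneg_left _ hmeshpos.le
            exact mul_le_mul_of_nonneg_left hb' hKpos.le
    -- conclude by archimedean
    by_contra hne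
    have hX : 0 < |Dd b - Dd a| := by
      rw [abs_pos]
      intro h0
      apply hne
      have : Dd a = Dd b := by linarith [sub_eq_zero.mp h0]
      simpa [hDd] using this
    set X := |Dd b - Dd a| with hXd
    set C0 : ℝ := (b - a) * (K * (b - a + π)) with hC0
    have hC0pos : 0 < C0 := by
      rw [hC0]
      have : 0 < b - a + π := by linarith
      have h2 : 0 < b - a := by linarith
      positivity
    obtain ⟨n, hn⟩ := exists_nat_gt (max ((b - a)/(c/2)) (C0 / X))
    have hn1 : (b - a)/(c/2) < n := lt_of_le_of_lt (le_max_left _ _) hn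
    have hn2 : C0 / X < n := lt_of_le_of_lt (le_max_right _ _) hn
    have hnpos : 0 < n := by
      by_contra h
      push_neg at h
      interval_cases n
      · simp at hn1
        have : 0 < (b - a)/(c/2) := by
          apply div_pos (by linarith) (by linarith)
        linarith
    have hmesh : (b - a)/n ≤ c/2 := by
      rw [div_le_iff₀ (by exact_mod_cast hnpos)]
      rw [div_lt_iff₀ (by linarith : (0:ℝ) < c/2)] at hn1
      linarith
    have hk := key n hnpos hmesh
    have : (b - a)/n * (K * (b - a + π)) = C0 / n := by
      rw [hC0]; ring
    rw [this] at hk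
    have : C0 / n < X := by
      rw [div_lt_iff₀ (by exact_mod_cast hnpos)]
      rw [div_lt_iff₀ hX] at hn2
      linarith

    linarith
  intro a b
  rcases lt_trichotomy a b with h | rfl | h
  · exact main a b h
  · rfl
  · exact (main b a h).symm

end




noncomputable def aB (ω : E →ₗ[ℝ] E →ₗ[ℝ] ℝ) (y : E) : ℝ :=
  sSup ((fun z => |ω z y|) '' Metric.sphere (0:E) 1)

section
variable [FiniteDimensional ℝ E] [Nontrivial E] (ω : E →ₗ[ℝ] E →ₗ[ℝ] ℝ)

lemma sphere_ne : (Metric.sphere (0:E) 1).Nonempty :=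
  NormedSpace.sphere_nonempty.mpr zero_le_one

/-- global bilinear bound -/
lemma exists_bound : ∃ C : ℝ, 0 ≤ C ∧ ∀ z w : E, |ω z w| ≤ C * ‖z‖ * ‖w‖ := by
  let Ψ : E →ₗ[ℝ] (E →L[ℝ] ℝ) :=
    (LinearMap.toContinuousLinearMap.toLinearMap).comp ω
  let Ψ' : E →L[ℝ] (E →L[ℝ] ℝ) := LinearMap.toContinuousLinearMap Ψ
  refine ⟨‖Ψ'‖, norm_nonneg Ψ', fun z w => ?_⟩
  have h1 : |ω z w| = ‖(Ψ' z) w‖ := by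
    simp only [Ψ', Ψ, LinearMap.coe_toContinuousLinearMap', LinearMap.coe_comp,
      LinearEquiv.coe_coe, Function.comp_apply, LinearMap.coe_toContinuousLinearMap,
      Real.norm_eq_abs]
  rw [h1]
  calc ‖(Ψ' z) w‖ ≤ ‖Ψ' z‖ * ‖w‖ := (Ψ' z).le_opNorm w
    _ ≤ (‖Ψ'‖ * ‖z‖) * ‖w‖ := by
        exact mul_le_mul_of_nonneg_right (Ψ'.le_opNorm z) (norm_nonneg w)

lemma continuous_app (y : E) : Continuous fun z : E => |ω z y| := by
  have : Continuous fun z : E => ω z y := by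
    have h : Continuous fun z : E => (ω.flip y) z := (ω.flip y).continuous_of_finiteDimensional
    simpa using h
  exact this.abs

lemma aB_mem_le {y z : E} (hz : ‖z‖ = 1) : |ω z y| ≤ aB ω y := by
  rcases exists_bound ω with ⟨C, hC0, hC⟩
  apply le_csSup
  · refine ⟨C * ‖y‖, ?_⟩
    rintro _ ⟨w, hw, rfl⟩
    have : ‖w‖ = 1 := by simpa using hw
    calc |ω w y| ≤ C * ‖w‖ * ‖y‖ := hC w y
      _ = C * ‖y‖ := by rw [this]; ring
  · exact ⟨z, by simpa using hz, rfl⟩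

lemma aB_le {y : E} {b : ℝ} (hb : ∀ z : E, ‖z‖ = 1 → |ω z y| ≤ b) : aB ω y ≤ b := by
  apply csSup_le
  · rcases sphere_ne (E := E) with ⟨z, hz⟩
    exact ⟨_, ⟨z, hz, rfl⟩⟩
  · rintro _ ⟨w, hw, rfl⟩
    exact hb w (by simpa using hw)

lemma aB_nonneg (y : E) : 0 ≤ aB ω y := by
  rcases sphere_ne (E := E) with ⟨z, hz⟩
  exact (abs_nonneg _).trans (aB_mem_le ω (by simpa using hz))

lemma aB_attain (y : E) : ∃ z : E, ‖z‖ = 1 ∧ |ω z y| = aB ω y := by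
  obtain ⟨z, hz, hmax⟩ := (isCompact_sphere (0:E) 1).exists_isMaxOn
    sphere_ne ((continuous_app ω y).continuousOn)
  have hz1 : ‖z‖ = 1 := by simpa using hz
  refine ⟨z, hz1, le_antisymm (aB_mem_le ω hz1) ?_⟩
  apply aB_le
  intro w hw
  have := hmax (a := w) (by simpa using hw)
  simpa using this

lemma aB_mul_le (x y : E) : |ω x y| ≤ ‖x‖ * aB ω y := by
  rcases eq_or_ne x 0 with rfl | hx
  · simp
  · have hnx : ‖x‖ ≠ 0 := norm_ne_zero_iff.mpr hx
    have hz : ‖(‖x‖⁻¹ • x)‖ = 1 := by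
      rw [norm_smul]; simp [abs_of_nonneg, hnx, inv_mul_cancel₀]
    have := aB_mem_le ω (y := y) hz
    rw [map_smul] at this
    simp only [LinearMap.smul_apply, smul_eq_mul, abs_mul, abs_inv, abs_norm] at this
    calc |ω x y| = ‖x‖ * (‖x‖⁻¹ * |ω x y|) := by field_simp
      _ ≤ ‖x‖ * aB ω y := by
          apply mul_le_mul_of_nonneg_left _ (norm_nonneg x)
          exact this

lemma aB_smul (r : ℝ) (y : E) : aB ω (r • y) = |r| * aB ω y := by
  have hle : ∀ (r : ℝ) (y : E), aB ω (r • y) ≤ |r| * aB ω y := by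
    intro r y
    apply aB_le
    intro z hz
    rw [map_smul, smul_eq_mul, abs_mul]
    exact mul_le_mul_of_nonneg_left (aB_mem_le ω hz) (abs_nonneg r)
  rcases eq_or_ne r 0 with rfl | hr
  · simp
    apply le_antisymm (aB_le ω (by simp)) (aB_nonneg ω 0)
  · refine le_antisymm (hle r y) ?_
    have := hle r⁻¹ (r • y)
    rw [smul_smul, inv_mul_cancel₀ hr, one_smul] at this
    rw [abs_inv] at this
    have hr' : 0 < |r| := abs_pos.mpr hr
    calc |r| * aB ω y ≤ |r| * (|r|⁻¹ * aB ω (r • y)) := by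
          exact mul_le_mul_of_nonneg_left this hr'.le
      _ = aB ω (r • y) := by field_simp

lemma aB_lipschitz : ∃ C : ℝ, 0 ≤ C ∧ ∀ y y' : E, |aB ω y - aB ω y'| ≤ C * ‖y - y'‖ := by
  rcases exists_bound ω with ⟨C, hC0, hC⟩
  have key : ∀ y y' : E, aB ω y ≤ aB ω y' + C * ‖y - y'‖ := by
    intro y y'
    apply aB_le
    intro z hz
    have : ω z y = ω z y' + ω z (y - y') := by
      rw [← map_add]; congr 1; abel
    rw [this]
    calc |ω z y' + ω z (y - y')| ≤ |ω z y'| + |ω z (y - y')| := abs_add_le _ _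
      _ ≤ aB ω y' + C * ‖y - y'‖ := by
          apply add_le_add (aB_mem_le ω hz)
          have := hC z (y - y')
          rwa [hz, mul_one] at this
  refine ⟨C, hC0, fun y y' => abs_sub_le_iff.mpr ⟨?_, ?_⟩⟩
  · linarith [key y y']
  · have := key y' y
    rw [norm_sub_rev] at this
    linarith

lemma aB_continuous : Continuous (aB ω) := by
  rcases aB_lipschitz ω with ⟨C, hC0, hC⟩
  rw [Metric.continuous_iff]
  intro y ε hε
  rcases eq_or_lt_of_le hC0 with hC0' | hC0'
  · exact ⟨1, one_pos, fun y' _ => by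
      have := hC y' y
      rw [← hC0'] at this
      simp at this
      rw [Real.dist_eq, this]; simpa using hε⟩
  · refine ⟨ε / C, by positivity, fun y' hy' => ?_⟩
    rw [Real.dist_eq]
    calc |aB ω y' - aB ω y| ≤ C * ‖y' - y‖ := hC y' y
      _ < C * (ε / C) := by
          apply mul_lt_mul_of_pos_left _ hC0'
          rwa [dist_eq_norm] at hy'
      _ = ε := by field_simp


variable (hdim : Module.finrank ℝ E = 2) (halt : ∀ x : E, ω x x = 0)
variable {e₁ e₂ : E} (he : ω e₁ e₂ = 1)

include hdim halt he in
lemma aB_pos {y : E} (hy : y ≠ 0) : 0 < aB ω y := by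
  have hind : LinearIndependent ℝ ![e₁, e₂] :=
    indep_of_ne_zero ω halt (by rw [he]; norm_num)
  rcases span_pair hdim hind y with ⟨s, t, rfl⟩
  have h1 : ω e₁ (s • e₁ + t • e₂) = t := by
    simp [map_add, map_smul, halt, he]
  have h2 : ω (s • e₁ + t • e₂) e₂ = s := by
    have h21 : ω e₂ e₂ = 0 := halt e₂
    simp [map_add, map_smul, he, h21]
  have hst : s ≠ 0 ∨ t ≠ 0 := by
    by_contra h
    push_neg at h
    exact hy (by simp [h.1, h.2])
  have key : ∃ z : E, z ≠ 0 ∧ ω z (s • e₁ + t • e₂) ≠ 0 := by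
    rcases hst with hs | ht
    · have hse : ω e₂ e₁ = -1 := by rw [skew ω halt, he]
      refine ⟨e₂, ?_, ?_⟩
      · intro h0; rw [h0] at he; simp at he
      · have h3 : ω e₂ (s • e₁ + t • e₂) = -s := by
          simp [map_add, map_smul, halt, hse]
        rw [h3]; simpa using hs
    · exact ⟨e₁, fun h0 => by rw [h0] at he; simp at he,
        by rw [h1]; exact ht⟩
  rcases key with ⟨z, hz0, hz⟩
  have hnz : ‖z‖ ≠ 0 := norm_ne_zero_iff.mpr hz0
  have hu : ‖(‖z‖⁻¹ • z)‖ = 1 := by rw [norm_smul]; simp [abs_of_nonneg, inv_mul_cancel₀ hnz]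
  have := aB_mem_le ω (y := s • e₁ + t • e₂) hu
  have hval : |ω (‖z‖⁻¹ • z) (s • e₁ + t • e₂)| > 0 := by
    rw [map_smul]
    simp only [LinearMap.smul_apply, smul_eq_mul, abs_mul, abs_inv, abs_norm]
    positivity
  linarith

lemma birkhoff_zero_right (x : E) : BirkhoffOrth x (0:E) := by
  intro t; simp

lemma birkhoff_zero_left (y : E) : BirkhoffOrth (0:E) y := by
  intro t; simp

lemma birkhoff_smul {x y : E} {c d : ℝ} (hc : c ≠ 0) (hd : d ≠ 0)
    (h : BirkhoffOrth x y) : BirkhoffOrth (c • x) (d • y) := by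
  intro t
  have key : c • x + t • d • y = c • (x + (t * d / c) • y) := by
    have hcc : c * (t * d / c) = t * d := by field_simp
    rw [smul_add, smul_smul, smul_smul, hcc]
  rw [key, norm_smul, norm_smul]
  exact mul_le_mul_of_nonneg_left (h (t * d / c)) (abs_nonneg c)

include hdim halt he in
lemma char {x y : E} (hy : y ≠ 0) :
    BirkhoffOrth x y ↔ |ω x y| = ‖x‖ * aB ω y := by
  have hay : 0 < aB ω y := aB_pos ω hdim halt he hy
  constructor
  · intro hB
    rcases eq_or_ne x 0 with rfl | hx
    · simp only [map_zero, LinearMap.zero_apply, abs_zero, norm_zero, zero_mul]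
    -- x, y independent
    have hdep : ¬ ∃ c : ℝ, y = c • x := by
      rintro ⟨c, rfl⟩
      have hc : c ≠ 0 := by rintro rfl; simp at hy
      have := hB (-c⁻¹)
      rw [smul_smul] at this
      simp [hc] at this
      exact hx (norm_le_zero_iff.mp (by simpa using this))
    have hind : LinearIndependent ℝ ![x, y] := by
      rw [LinearIndependent.pair_iff]
      intro s t hst
      rcases eq_or_ne t 0 with rfl | ht
      · simp only [zero_smul, add_zero] at hst
        rcases smul_eq_zero.mp hst with h | h
        · exact ⟨h, rfl⟩
        · exact absurd h hx
      · exfalso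
        apply hdep
        refine ⟨-s/t, ?_⟩
        have : t • y = -(s • x) := by
          rw [eq_neg_iff_add_eq_zero]; rw [add_comm] at hst; exact hst
        have h2 : y = t⁻¹ • (t • y) := by rw [smul_smul, inv_mul_cancel₀ ht, one_smul]
        rw [h2, this, smul_neg, smul_smul]
        rw [← neg_smul]
        congr 1
        field_simp
    rcases aB_attain ω y with ⟨z, hz1, hz2⟩
    rcases span_pair hdim hind z with ⟨α, β, hz⟩
    have hωz : ω z y = α * ω x y := by
      rw [hz]
      simp [map_add, map_smul, halt]
    have hα : α ≠ 0 := by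
      intro h0
      rw [h0] at hωz
      simp at hωz
      rw [hωz] at hz2
      simp at hz2
      linarith [hz2 ▸ hay]
    -- Birkhoff inequality at t = β/α
    have hBa := hB (β / α)
    have hxa : |α| * ‖x‖ ≤ 1 := by
      calc |α| * ‖x‖ ≤ |α| * ‖x + (β/α) • y‖ :=
            mul_le_mul_of_nonneg_left hBa (abs_nonneg α)
        _ = ‖α • (x + (β/α) • y)‖ := by rw [norm_smul, Real.norm_eq_abs]
        _ = ‖z‖ := by
            congr 1
            rw [hz, smul_add, smul_smul]
            congr 2
            field_simp
        _ = 1 := hz1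
    have hup : ‖x‖ * aB ω y ≤ |ω x y| := by
      have h1 : aB ω y = |α| * |ω x y| := by rw [← hz2, hωz, abs_mul]
      calc ‖x‖ * aB ω y = (|α| * ‖x‖) * |ω x y| := by rw [h1]; ring
        _ ≤ 1 * |ω x y| := mul_le_mul_of_nonneg_right hxa (abs_nonneg _)
        _ = |ω x y| := one_mul _
    exact le_antisymm (aB_mul_le ω x y) hup
  · intro heq t
    have h1 : ω (x + t • y) y = ω x y := by
      simp [map_add, map_smul, halt]
    have h3 : |ω (x + t • y) y| ≤ ‖x + t • y‖ * aB ω y := aB_mul_le ω _ y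
    rw [h1, heq] at h3
    exact le_of_mul_le_mul_right h3 hay

include hdim halt he in
lemma partner {y : E} (hy : y ≠ 0) : ∃ z : E, ‖z‖ = 1 ∧ BirkhoffOrth z y := by
  rcases aB_attain ω y with ⟨z, hz1, hz2⟩
  refine ⟨z, hz1, ?_⟩
  rw [char ω hdim halt he hy]
  rw [hz1, one_mul, hz2]



lemma birkhoff_unsmul_right {x y : E} {r : ℝ} (hr : r ≠ 0)
    (h : BirkhoffOrth x (r • y)) : BirkhoffOrth x y := by
  have h2 := birkhoff_smul (one_ne_zero (α := ℝ)) (inv_ne_zero hr) h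
  simpa [smul_smul, inv_mul_cancel₀ hr] using h2

lemma birkhoff_not_self {x : E} (hx : x ≠ 0) : ¬ BirkhoffOrth x x := by
  intro h
  have h2 := h (-1)
  simp at h2
  exact hx h2

noncomputable def pvec (e₁ e₂ : E) (θ : ℝ) : E := cos θ • e₁ + sin θ • e₂

include halt he in
lemma omega_pvec (θ φ : ℝ) : ω (pvec e₁ e₂ θ) (pvec e₁ e₂ φ) = sin (φ - θ) := by
  have h21 : ω e₂ e₁ = -1 := by rw [skew ω halt, he]
  simp only [pvec, map_add, map_smul, LinearMap.add_apply, LinearMap.smul_apply,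
    smul_eq_mul, he, h21, halt]
  rw [Real.sin_sub]
  ring

include halt he in
lemma pvec_ne_zero (θ : ℝ) : pvec e₁ e₂ θ ≠ 0 := by
  intro h0
  have h1 : ω (pvec e₁ e₂ θ) e₂ = cos θ := by
    simp only [pvec, map_add, map_smul, LinearMap.add_apply, LinearMap.smul_apply,
      smul_eq_mul, he, halt]
    ring
  have h2 : ω e₁ (pvec e₁ e₂ θ) = sin θ := by
    simp only [pvec, map_add, map_smul, smul_eq_mul, he, halt]
    ring
  rw [h0] at h1 h2
  simp at h1 h2
  nlinarith [Real.sin_sq_add_cos_sq θ, h1, h2]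

lemma pvec_shift (e₁ e₂ : E) (θ : ℝ) (k : ℤ) :
    pvec e₁ e₂ (θ + k * π) = cos (k * π) • pvec e₁ e₂ θ := by
  have hs : sin ((k:ℝ) * π) = 0 := Real.sin_int_mul_pi k
  simp only [pvec, Real.cos_add, Real.sin_add, hs]
  rw [smul_add, smul_smul, smul_smul]
  ring_nf

lemma cos_int_pi_ne (k : ℤ) : cos ((k:ℝ) * π) ≠ 0 := by
  have hs : sin ((k:ℝ) * π) = 0 := Real.sin_int_mul_pi k
  have := Real.sin_sq_add_cos_sq ((k:ℝ) * π)
  intro h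
  rw [h, hs] at this
  norm_num at this

lemma pvec_two_pi (e₁ e₂ : E) (θ : ℝ) : pvec e₁ e₂ (θ + 2*π) = pvec e₁ e₂ θ := by
  simp only [pvec, Real.cos_add_two_pi, Real.sin_add_two_pi]

include hdim halt he in
lemma polar {z : E} (hz : z ≠ 0) : ∃ r φ : ℝ, 0 < r ∧ z = r • pvec e₁ e₂ φ := by
  have hind : LinearIndependent ℝ ![e₁, e₂] :=
    indep_of_ne_zero ω halt (by rw [he]; norm_num)
  obtain ⟨s, t, hst⟩ := span_pair hdim hind z
  set ζ : ℂ := ⟨s, t⟩ with hζ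
  have hζ0 : ζ ≠ 0 := by
    intro h
    rw [Complex.ext_iff] at h
    simp [hζ] at h
    exact hz (by rw [hst, h.1, h.2]; simp)
  refine ⟨‖ζ‖, ζ.arg, norm_pos_iff.mpr hζ0, ?_⟩
  have hpolar := Complex.norm_mul_cos_add_sin_mul_I ζ
  have hre : ‖ζ‖ * cos ζ.arg = s := by
    have := congrArg Complex.re hpolar
    simpa [hζ] using this
  have him : ‖ζ‖ * sin ζ.arg = t := by
    have := congrArg Complex.im hpolar
    simpa [hζ] using this
  rw [hst, pvec, smul_add, smul_smul, smul_smul, hre, him]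

-- N A ℓ m
noncomputable def Nf (e₁ e₂ : E) (θ : ℝ) : ℝ := ‖pvec e₁ e₂ θ‖
noncomputable def Af (ω : E →ₗ[ℝ] E →ₗ[ℝ] ℝ) (e₁ e₂ : E) (θ : ℝ) : ℝ := aB ω (pvec e₁ e₂ θ)
noncomputable def lf (e₁ e₂ : E) (θ : ℝ) : ℝ := log (Nf e₁ e₂ θ)
noncomputable def mf (ω : E →ₗ[ℝ] E →ₗ[ℝ] ℝ) (e₁ e₂ : E) (θ : ℝ) : ℝ := log (Af ω e₁ e₂ θ)

include halt he in
lemma Nf_pos (θ : ℝ) : 0 < Nf e₁ e₂ θ :=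
  norm_pos_iff.mpr (pvec_ne_zero ω halt he θ)

include hdim halt he in
lemma Af_pos (θ : ℝ) : 0 < Af ω e₁ e₂ θ :=
  aB_pos ω hdim halt he (pvec_ne_zero ω halt he θ)

lemma pvec_continuous (e₁ e₂ : E) : Continuous (pvec e₁ e₂) :=
  (Real.continuous_cos.smul continuous_const).add
    (Real.continuous_sin.smul continuous_const)

include halt he in
lemma lf_continuous : Continuous (lf (E := E) e₁ e₂) := by
  apply Continuous.log ((pvec_continuous e₁ e₂).norm)
  intro θ
  exact (Nf_pos ω halt he θ).ne'

include hdim halt he in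
lemma mf_continuous : Continuous (mf ω e₁ e₂) := by
  apply Continuous.log ((aB_continuous ω).comp (pvec_continuous e₁ e₂))
  intro θ
  exact (Af_pos ω hdim halt he θ).ne'

include halt he in
lemma lf_periodic : Function.Periodic (lf (E := E) e₁ e₂) (2*π) := by
  intro θ
  simp only [lf, Nf, pvec_two_pi]

include halt he in
lemma mf_periodic : Function.Periodic (mf ω e₁ e₂) (2*π) := by
  intro θ
  simp only [mf, Af, pvec_two_pi]

include hdim halt he in
lemma hG_geom : ∀ α β : ℝ, 0 < sin (β - α) →
    log (sin (β - α)) ≤ lf e₁ e₂ α + mf ω e₁ e₂ β ∧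
    log (sin (β - α)) ≤ lf e₁ e₂ β + mf ω e₁ e₂ α := by
  intro α β hs
  have hNα := Nf_pos ω halt he α
  have hNβ := Nf_pos ω halt he β
  have hAα := Af_pos ω hdim halt he α
  have hAβ := Af_pos ω hdim halt he β
  constructor
  · have h1 : sin (β - α) ≤ Nf e₁ e₂ α * Af ω e₁ e₂ β := by
      have := aB_mul_le ω (pvec e₁ e₂ α) (pvec e₁ e₂ β)
      rw [omega_pvec ω halt he α β] at this
      calc sin (β - α) ≤ |sin (β - α)| := le_abs_self _
        _ ≤ _ := this
    have h2 := (Real.log_le_log_iff hs (by positivity)).mpr h1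
    rwa [Real.log_mul hNα.ne' hAβ.ne'] at h2
  · have h1 : sin (β - α) ≤ Nf e₁ e₂ β * Af ω e₁ e₂ α := by
      have := aB_mul_le ω (pvec e₁ e₂ β) (pvec e₁ e₂ α)
      rw [omega_pvec ω halt he β α] at this
      have habs : |sin (α - β)| = sin (β - α) := by
        rw [show α - β = -(β - α) by ring, Real.sin_neg, abs_neg, abs_of_pos hs]
      rwa [habs] at this
    have h2 := (Real.log_le_log_iff hs (by positivity)).mpr h1
    rwa [Real.log_mul hNβ.ne' hAα.ne'] at h2

include hdim halt he in
lemma pair_exists_geom (hsym : ∀ x y : E, BirkhoffOrth x y → BirkhoffOrth y x) :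
    ∀ θ : ℝ, ∃ φ : ℝ, IsPair (lf e₁ e₂) (mf ω e₁ e₂) θ φ := by
  intro θ
  have hpθ : pvec e₁ e₂ θ ≠ 0 := pvec_ne_zero ω halt he θ
  obtain ⟨z, hz1, hz2⟩ := partner ω hdim halt he hpθ
  have hz0 : z ≠ 0 := by intro h; rw [h] at hz1; simp at hz1
  have hθz : BirkhoffOrth (pvec e₁ e₂ θ) z := hsym z _ hz2
  obtain ⟨r, φ₀, hr, hzφ⟩ := polar ω hdim halt he hz0
  rw [hzφ] at hθz
  have hθφ₀ : BirkhoffOrth (pvec e₁ e₂ θ) (pvec e₁ e₂ φ₀) :=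
    birkhoff_unsmul_right hr.ne' hθz
  -- sin (φ₀ - θ) ≠ 0
  have hsφ₀ : sin (φ₀ - θ) ≠ 0 := by
    intro h0
    obtain ⟨k, hk⟩ := Real.sin_eq_zero_iff.mp h0
    have hφ₀ : φ₀ = θ + k * π := by linarith
    rw [hφ₀, pvec_shift] at hθφ₀
    have := birkhoff_unsmul_right (cos_int_pi_ne k) hθφ₀
    exact birkhoff_not_self hpθ this
  set k : ℤ := ⌈(θ - φ₀)/π⌉ with hk
  set φ : ℝ := φ₀ + k * π with hφ
  have hπ : (0:ℝ) < π := Real.pi_pos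
  have hk1 : (θ - φ₀)/π ≤ (k:ℝ) := Int.le_ceil _
  have hk2 : (k:ℝ) < (θ - φ₀)/π + 1 := Int.ceil_lt_add_one _
  have hwin1 : θ ≤ φ := by
    rw [hφ]
    rw [div_le_iff₀ hπ] at hk1
    linarith
  have hwin2 : φ < θ + π := by
    have h3 : (k:ℝ) * π < θ - φ₀ + π := by
      have := mul_lt_mul_of_pos_right hk2 hπ
      rwa [add_mul, one_mul, div_mul_cancel₀ _ hπ.ne'] at this
    rw [hφ]
    linarith
  have hwin1' : θ < φ := by
    rcases eq_or_lt_of_le hwin1 with heq | h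
    · exfalso
      apply hsφ₀
      have : φ₀ - θ = -(k * π) := by rw [hφ] at heq; linarith
      rw [this]
      simp [Real.sin_int_mul_pi]
    · exact h
  have hBθφ : BirkhoffOrth (pvec e₁ e₂ θ) (pvec e₁ e₂ φ) := by
    rw [hφ, pvec_shift]
    have h := birkhoff_smul (one_ne_zero (α := ℝ)) (cos_int_pi_ne k) hθφ₀
    simpa using h
  have hspos : 0 < sin (φ - θ) :=
    Real.sin_pos_of_pos_of_lt_pi (by linarith) (by linarith)
  have hNθ := Nf_pos ω halt he θ
  have hNφ := Nf_pos ω halt he φ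
  have hAθ := Af_pos ω hdim halt he θ
  have hAφ := Af_pos ω hdim halt he φ
  have hE1 : log (sin (φ - θ)) = lf e₁ e₂ θ + mf ω e₁ e₂ φ := by
    have h := (char ω hdim halt he (pvec_ne_zero ω halt he φ)).mp hBθφ
    rw [omega_pvec ω halt he θ φ, abs_of_pos hspos] at h
    rw [h]
    exact Real.log_mul hNθ.ne' hAφ.ne'
  have hE2 : log (sin (φ - θ)) = lf e₁ e₂ φ + mf ω e₁ e₂ θ := by
    have hB2 : BirkhoffOrth (pvec e₁ e₂ φ) (pvec e₁ e₂ θ) := hsym _ _ hBθφ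
    have h := (char ω hdim halt he (pvec_ne_zero ω halt he θ)).mp hB2
    rw [omega_pvec ω halt he φ θ] at h
    have habs : |sin (θ - φ)| = sin (φ - θ) := by
      rw [show θ - φ = -(φ - θ) by ring, Real.sin_neg, abs_neg, abs_of_pos hspos]
    rw [habs] at h
    rw [h]
    exact Real.log_mul hNφ.ne' hAθ.ne'
  exact ⟨φ, hwin1', hwin2, hE1, hE2⟩

end
end Stmt17

open Stmt17 in
/-- A normed plane is Radon (Birkhoff orthogonality is symmetric) iff all
"Birkhoff rectangles" with unit sides have the same area: there is `λ > 0`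
with `|ω(x, y)| = λ` whenever `x, y` are unit vectors with `x ⊣_B y`. -/
theorem stmt_17 {E : Type*} [NormedAddCommGroup E] [NormedSpace ℝ E]
    (hdim : Module.finrank ℝ E = 2)
    (ω : E →ₗ[ℝ] E →ₗ[ℝ] ℝ) (halt : ∀ x : E, ω x x = 0) (hω : ω ≠ 0) :
    (∀ x y : E, BirkhoffOrth x y → BirkhoffOrth y x) ↔
      ∃ lam : ℝ, 0 < lam ∧ ∀ x y : E, ‖x‖ = 1 → ‖y‖ = 1 →
        BirkhoffOrth x y → |ω x y| = lam := by
  haveI : FiniteDimensional ℝ E := .of_finrank_eq_succ hdim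
  haveI : Nontrivial E := Module.nontrivial_of_finrank_pos (R := ℝ)
    (by rw [hdim]; norm_num)
  obtain ⟨u, v, huv⟩ : ∃ u v : E, ω u v ≠ 0 := by
    by_contra h
    push_neg at h
    apply hω
    ext u v
    simp [h u v]
  set e₁ : E := u with he₁
  set e₂ : E := (ω u v)⁻¹ • v with he₂
  have he : ω e₁ e₂ = 1 := by
    rw [he₁, he₂, map_smul, smul_eq_mul, inv_mul_cancel₀ huv]
  constructor
  · -- symmetry implies constant area
    intro hsym
    have hN0 := Nf_pos ω halt he 0
    have hA0 := Af_pos ω hdim halt he 0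
    refine ⟨Af ω e₁ e₂ 0 / Nf e₁ e₂ 0, by positivity, ?_⟩
    intro x y hx hy hxy
    have hy0 : y ≠ 0 := by intro h; rw [h] at hy; simp at hy
    have hchar := (char ω hdim halt he (x := x) hy0).mp hxy
    rw [hx, one_mul] at hchar
    rw [hchar]
    -- aB ω y = Af 0 / Nf 0
    obtain ⟨r, φ, hr, hyφ⟩ := polar ω hdim halt he hy0
    have hNφ := Nf_pos ω halt he φ
    have hAφ := Af_pos ω hdim halt he φ
    have hnorm : r * Nf e₁ e₂ φ = 1 := by
      rw [← hy]
      rw [hyφ, norm_smul, Real.norm_eq_abs, abs_of_pos hr]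
      rfl
    have hway : aB ω y = Af ω e₁ e₂ φ / Nf e₁ e₂ φ := by
      rw [hyφ, aB_smul, abs_of_pos hr]
      have hrr : r = (Nf e₁ e₂ φ)⁻¹ := by
        field_simp at hnorm ⊢
        linarith
      rw [hrr]
      rw [div_eq_inv_mul]
      rfl
    rw [hway]
    have hDc := D_const (hG_geom ω hdim halt he)
      (lf_continuous ω halt he) (mf_continuous ω hdim halt he)
      (lf_periodic ω halt he) (mf_periodic ω halt he)
      (pair_exists_geom ω hdim halt he hsym) φ 0
    have e1 : Af ω e₁ e₂ φ / Nf e₁ e₂ φ = Real.exp (mf ω e₁ e₂ φ - lf e₁ e₂ φ) := by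
      rw [Real.exp_sub, mf, lf, Real.exp_log hAφ, Real.exp_log hNφ]
    have e2 : Af ω e₁ e₂ 0 / Nf e₁ e₂ 0 = Real.exp (mf ω e₁ e₂ 0 - lf e₁ e₂ 0) := by
      rw [Real.exp_sub, mf, lf, Real.exp_log hA0, Real.exp_log hN0]
    rw [e1, e2]
    congr 1
    linarith
  · -- constant area implies symmetry
    rintro ⟨lam, hlam, hall⟩ x y hxy
    rcases eq_or_ne x 0 with rfl | hx0
    · intro t; simp
    rcases eq_or_ne y 0 with rfl | hy0
    · intro t; simp
    have hnx : ‖x‖ ≠ 0 := norm_ne_zero_iff.mpr hx0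
    have hny : ‖y‖ ≠ 0 := norm_ne_zero_iff.mpr hy0
    set xh : E := ‖x‖⁻¹ • x with hxh
    set yh : E := ‖y‖⁻¹ • y with hyh
    have hxh1 : ‖xh‖ = 1 := by
      rw [hxh, norm_smul, Real.norm_eq_abs, abs_inv, abs_norm, inv_mul_cancel₀ hnx]
    have hyh1 : ‖yh‖ = 1 := by
      rw [hyh, norm_smul, Real.norm_eq_abs, abs_inv, abs_norm, inv_mul_cancel₀ hny]
    have hxh0 : xh ≠ 0 := by intro h; rw [h] at hxh1; simp at hxh1
    have hyh0 : yh ≠ 0 := by intro h; rw [h] at hyh1; simp at hyh1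
    have hB : BirkhoffOrth xh yh :=
      birkhoff_smul (inv_ne_zero hnx) (inv_ne_zero hny) hxy
    have h1 : |ω xh yh| = lam := hall _ _ hxh1 hyh1 hB
    have h2 : aB ω yh = lam := by
      have := (char ω hdim halt he hyh0).mp hB
      rw [hxh1, one_mul] at this
      rw [← this, h1]
    -- aB xh = lam via a partner of xh
    have h3 : aB ω xh = lam := by
      obtain ⟨w, hw1, hw2⟩ := partner ω hdim halt he hxh0
      have hwval : |ω w xh| = lam := hall _ _ hw1 hxh1 hw2
      have := (char ω hdim halt he hxh0).mp hw2
      rw [hw1, one_mul] at this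
      rw [← this, hwval]
    have h4 : BirkhoffOrth yh xh := by
      rw [char ω hdim halt he hxh0]
      rw [hyh1, one_mul, h3]
      rw [skew ω halt, abs_neg, h1]
    have h5 := birkhoff_smul (c := ‖y‖) (d := ‖x‖) hny hnx h4
    rw [hyh, hxh, smul_inv_smul₀ hny, smul_inv_smul₀ hnx] at h5
    exact h5
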